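/- Let q be a positive integer, m : Fin q → ℕ with each m j > 0, n = ∏ j, m j, G = ∀ j : Fin q, ZMod (m j), and φ : Matrix G G ℂ with φ s t = ∏ j, exp(2π·I·(s j).val·(t j).val / m j). Suppose A = Matrix.circulant a (a : G → ℂ) is an invertible q-level circulant matrix and let ν = φ.mulVec a be its vector of eigenvalues. Then the inverse A⁻¹ is also a q-level circulant matrix (there exists a' : G → ℂ with A⁻¹ = Matrix.circulant a'), and A⁻¹ = (n : ℂ)⁻¹ • (φᴴ * Matrix.diagonal (fun s => (ν s)⁻¹) * φ). -/

import Mathlib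

open Complex Matrix

section mcmAux
open Finset

/-- The basic root of unity for one level. -/
noncomputable def mcmZeta (m : ℕ) : ℂ := Complex.exp (2 * Real.pi * Complex.I / m)

lemma mcmZeta_prim (m : ℕ) [NeZero m] : IsPrimitiveRoot (mcmZeta m) m :=
  Complex.isPrimitiveRoot_exp m (NeZero.ne m)

lemma mcmZeta_pow_eq_one (m : ℕ) [NeZero m] : mcmZeta m ^ m = 1 :=
  (mcmZeta_prim m).pow_eq_one

lemma mcm_exp_eq (m : ℕ) (a b : ℕ) :
    Complex.exp (2 * Real.pi * Complex.I * a * b / m) = mcmZeta m ^ (a * b) := by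
  rw [mcmZeta, ← Complex.exp_nat_mul]
  congr 1
  push_cast
  ring

lemma mcmZeta_pow_congr (m : ℕ) [NeZero m] {a b : ℕ} (h : a ≡ b [MOD m]) :
    mcmZeta m ^ a = mcmZeta m ^ b := by
  rw [pow_eq_pow_mod a (mcmZeta_pow_eq_one m), pow_eq_pow_mod b (mcmZeta_pow_eq_one m), h]

lemma mcm_chi_add (m : ℕ) [NeZero m] (u x y : ZMod m) :
    mcmZeta m ^ (u.val * (x + y).val)
      = mcmZeta m ^ (u.val * x.val) * mcmZeta m ^ (u.val * y.val) := by
  rw [← pow_add, ← Nat.mul_add]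
  exact mcmZeta_pow_congr m (Nat.ModEq.mul_left _ ((ZMod.val_add x y).symm ▸ (Nat.mod_modEq _ m)))

lemma mcm_chi_conj (m : ℕ) [NeZero m] (u x : ZMod m) :
    (starRingEnd ℂ) (mcmZeta m ^ (u.val * x.val)) = mcmZeta m ^ (u.val * (-x).val) := by
  have h1 : mcmZeta m ^ (u.val * x.val) * mcmZeta m ^ (u.val * (-x).val) = 1 := by
    rw [← mcm_chi_add m u x (-x), add_neg_cancel, ZMod.val_zero, Nat.mul_zero, pow_zero]
  have habs : ‖mcmZeta m ^ (u.val * x.val)‖ = 1 := by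
    rw [norm_pow, mcmZeta, Complex.norm_exp]
    norm_num
  have h2 : (starRingEnd ℂ) (mcmZeta m ^ (u.val * x.val)) * (mcmZeta m ^ (u.val * x.val)) = 1 := by
    rw [mul_comm, Complex.mul_conj, ← Complex.sq_norm, habs]
    norm_num
  have hne : mcmZeta m ^ (u.val * x.val) ≠ 0 := by
    intro h; rw [h, norm_zero] at habs; norm_num at habs
  rw [mul_comm] at h1
  rw [← h1] at h2
  rw [map_pow] at h2 ⊢
  exact mul_right_cancel₀ hne h2

lemma mcm_chi_sum (m : ℕ) [NeZero m] (x : ZMod m) :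
    ∑ u : ZMod m, mcmZeta m ^ (u.val * x.val) = if x = 0 then (m : ℂ) else 0 := by
  have key : ∑ u : ZMod m, mcmZeta m ^ (u.val * x.val)
      = ∑ k ∈ Finset.range m, (mcmZeta m ^ x.val) ^ k := by
    rw [Finset.sum_nbij' (i := fun (u : ZMod m) => u.val) (j := fun k => (k : ZMod m))]
    · intro u _; exact Finset.mem_range.mpr (ZMod.val_lt u)
    · intro k _; exact Finset.mem_univ _
    · intro u _; exact (ZMod.natCast_rightInverse u)
    · intro k hk; exact ZMod.val_cast_of_lt (Finset.mem_range.mp hk)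
    · intro u _; rw [← pow_mul, Nat.mul_comm]
  rw [key]
  by_cases hx : x = 0
  · simp [hx, ZMod.val_zero]
  · rw [if_neg hx]
    have hne1 : mcmZeta m ^ x.val ≠ 1 := by
      apply (mcmZeta_prim m).pow_ne_one_of_pos_of_lt
      · exact (fun h => hx (by rwa [← ZMod.val_eq_zero]))
      · exact ZMod.val_lt x
    rw [geom_sum_eq hne1, ← pow_mul, Nat.mul_comm, pow_mul, mcmZeta_pow_eq_one, one_pow]
    simp

variable {q : ℕ} {m : Fin q → ℕ} [∀ j, NeZero (m j)]

/-- The multilevel Fourier kernel. -/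
noncomputable def mcmE (m : Fin q → ℕ) (u x : ∀ j : Fin q, ZMod (m j)) : ℂ :=
  ∏ j, mcmZeta (m j) ^ ((u j).val * ((x j).val))

lemma mcmE_add (u x y : ∀ j, ZMod (m j)) :
    mcmE m u (x + y) = mcmE m u x * mcmE m u y := by
  rw [mcmE, mcmE, mcmE, ← Finset.prod_mul_distrib]
  exact Finset.prod_congr rfl fun j _ => mcm_chi_add (m j) (u j) (x j) (y j)

omit [∀ j, NeZero (m j)] in
lemma mcmE_symm (u x : ∀ j, ZMod (m j)) : mcmE m u x = mcmE m x u := by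
  rw [mcmE, mcmE]
  exact Finset.prod_congr rfl fun j _ => by rw [Nat.mul_comm]

lemma mcmE_conj (u x : ∀ j, ZMod (m j)) :
    (starRingEnd ℂ) (mcmE m u x) = mcmE m u (-x) := by
  rw [mcmE, mcmE, map_prod]
  exact Finset.prod_congr rfl fun j _ => mcm_chi_conj (m j) (u j) (x j)

lemma mcmE_sum (x : ∀ j, ZMod (m j)) :
    ∑ u, mcmE m u x = if x = 0 then ((∏ j, m j : ℕ) : ℂ) else 0 := by
  have h : ∑ u : (∀ j, ZMod (m j)), mcmE m u x
      = ∏ j, ∑ c : ZMod (m j), mcmZeta (m j) ^ (c.val * (x j).val) := by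
    rw [Finset.prod_univ_sum, ← Fintype.piFinset_univ]
    rfl
  rw [h]
  by_cases hx : x = 0
  · subst hx
    rw [if_pos rfl]
    push_cast
    exact Finset.prod_congr rfl fun j _ => by rw [mcm_chi_sum]; simp
  · rw [if_neg hx]
    obtain ⟨j0, hj0⟩ : ∃ j, x j ≠ 0 := by
      by_contra h'
      push_neg at h'
      exact hx (funext h')
    exact Finset.prod_eq_zero (Finset.mem_univ j0) (by rw [mcm_chi_sum, if_neg hj0])

/-- `φᴴ D φ` is a circulant, for any diagonal `D`. -/
lemma mcm_diag (φ : Matrix (∀ j : Fin q, ZMod (m j)) (∀ j : Fin q, ZMod (m j)) ℂ)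
    (hφE : ∀ s t, φ s t = mcmE m s t) (d : (∀ j : Fin q, ZMod (m j)) → ℂ) :
    φᴴ * Matrix.diagonal d * φ
      = Matrix.circulant (fun x => ∑ u, d u * mcmE m u (-x)) := by
  ext s t
  rw [Matrix.mul_apply, Matrix.circulant_apply, neg_sub, sub_eq_add_neg]
  refine Finset.sum_congr rfl fun u _ => ?_
  rw [Matrix.mul_diagonal, Matrix.conjTranspose_apply, hφE u s, hφE u t, Complex.star_def, mcmE_conj,
    mcmE_add]
  ring

lemma mcm_circulant_delta (c : ℂ) :
    Matrix.circulant (fun x : ∀ j : Fin q, ZMod (m j) => if x = 0 then c else 0)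
      = c • (1 : Matrix (∀ j : Fin q, ZMod (m j)) (∀ j : Fin q, ZMod (m j)) ℂ) := by
  ext s t
  rw [Matrix.circulant_apply, Matrix.smul_apply, Matrix.one_apply]
  by_cases h : s = t <;> simp [h, sub_eq_zero]

end mcmAux

/-- The inverse of an invertible q-level circulant matrix is again a q-level circulant
matrix, and `A⁻¹ = (1/n) φᴴ diag(ν⁻¹) φ` where `ν = φ.mulVec a`. -/
theorem mcm_inverse (q : ℕ) (hq : 0 < q) (m : Fin q → ℕ) [∀ j, NeZero (m j)]
    (n : ℕ) (hn : n = ∏ j, m j)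
    (φ : Matrix (∀ j : Fin q, ZMod (m j)) (∀ j : Fin q, ZMod (m j)) ℂ)
    (hφ : ∀ s t, φ s t =
      ∏ j, Complex.exp (2 * Real.pi * Complex.I * (s j).val * (t j).val / (m j)))
    (a : (∀ j : Fin q, ZMod (m j)) → ℂ)
    (A : Matrix (∀ j : Fin q, ZMod (m j)) (∀ j : Fin q, ZMod (m j)) ℂ)
    (hA : A = Matrix.circulant a) (hAunit : IsUnit A)
    (ν : (∀ j : Fin q, ZMod (m j)) → ℂ) (hν : ν = φ.mulVec a) :
    (∃ a' : (∀ j : Fin q, ZMod (m j)) → ℂ, A⁻¹ = Matrix.circulant a') ∧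
      A⁻¹ = (n : ℂ)⁻¹ • (φᴴ * Matrix.diagonal (fun s => (ν s)⁻¹) * φ) := by
  have hn0 : (n : ℂ) ≠ 0 := by
    rw [hn]
    push_cast
    exact Finset.prod_ne_zero_iff.mpr fun j _ => Nat.cast_ne_zero.mpr (NeZero.ne (m j))
  have hφE : ∀ s t, φ s t = mcmE m s t := by
    intro s t
    rw [hφ, mcmE]
    exact Finset.prod_congr rfl fun j _ => mcm_exp_eq (m j) _ _
  have hEsum : ∀ x, ∑ u, mcmE m u x = if x = 0 then (n : ℂ) else 0 := by
    intro x
    rw [mcmE_sum, hn]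
  -- F1 : φᴴ φ = n • 1
  have F1 : φᴴ * φ = (n : ℂ) • 1 := by
    have h := mcm_diag φ hφE (fun _ => (1 : ℂ))
    rw [Matrix.diagonal_one, Matrix.mul_one] at h
    rw [h]
    have : (fun x : ∀ j : Fin q, ZMod (m j) => ∑ u, (1 : ℂ) * mcmE m u (-x))
        = fun x => if x = 0 then (n : ℂ) else 0 := by
      funext x
      simp only [one_mul, hEsum, neg_eq_zero]
    rw [this, mcm_circulant_delta]
  -- F2 : φ φᴴ = n • 1
  have F2 : φ * φᴴ = (n : ℂ) • 1 := by
    have h1 : ((n : ℂ)⁻¹ • φᴴ) * φ = 1 := by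
      rw [Matrix.smul_mul, F1, smul_smul, inv_mul_cancel₀ hn0, one_smul]
    have h2 : φ * ((n : ℂ)⁻¹ • φᴴ) = 1 := mul_eq_one_comm.mp h1
    rw [Matrix.mul_smul] at h2
    calc φ * φᴴ = (n : ℂ) • ((n : ℂ)⁻¹ • (φ * φᴴ)) := by
          rw [smul_smul, mul_inv_cancel₀ hn0, one_smul]
      _ = (n : ℂ) • 1 := by rw [h2]
  -- F3 : φᴴ diag(ν) φ = n • A
  have F3 : φᴴ * Matrix.diagonal ν * φ = (n : ℂ) • A := by
    rw [mcm_diag φ hφE ν]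
    have key : (fun x => ∑ u, ν u * mcmE m u (-x)) = (n : ℂ) • a := by
      funext x
      have h1 : ∀ u, ν u * mcmE m u (-x) = ∑ w, a w * mcmE m u (w + -x) := by
        intro u
        rw [hν, Matrix.mulVec, dotProduct, Finset.sum_mul]
        refine Finset.sum_congr rfl fun w _ => ?_
        rw [hφE u w, mcmE_add]
        ring
      simp only [h1]
      rw [Finset.sum_comm]
      have h2 : ∀ w, ∑ u, a w * mcmE m u (w + -x) = if w = x then a w * n else 0 := by
        intro w
        rw [← Finset.mul_sum, hEsum]
        by_cases hw : w = x
        · simp [hw]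
        · rw [if_neg hw, if_neg (by
            intro h
            exact hw (by linear_combination (norm := abel) h)), mul_zero]
      simp only [h2]
      rw [Finset.sum_ite_eq' Finset.univ x (fun w => a w * n)]
      simp [mul_comm]
    rw [key, Matrix.circulant_smul, hA]
  -- ν never vanishes
  have F4 : ∀ s, ν s ≠ 0 := by
    have hdet : A.det ≠ 0 := ((Matrix.isUnit_iff_isUnit_det A).mp hAunit).ne_zero
    have h := congrArg Matrix.det F3
    rw [Matrix.det_mul, Matrix.det_mul, Matrix.det_diagonal, Matrix.det_smul] at h
    have hprod : ∏ s, ν s ≠ 0 := by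
      intro h0
      rw [h0, mul_zero, zero_mul] at h
      exact mul_ne_zero (pow_ne_zero _ hn0) hdet h.symm
    intro s hs
    exact hprod (Finset.prod_eq_zero (Finset.mem_univ s) hs)
  -- the candidate inverse
  set B := (n : ℂ)⁻¹ • (φᴴ * Matrix.diagonal (fun s => (ν s)⁻¹) * φ) with hB
  have hDD : Matrix.diagonal ν * Matrix.diagonal (fun s => (ν s)⁻¹) = 1 := by
    rw [Matrix.diagonal_mul_diagonal]
    have : (fun s => ν s * (ν s)⁻¹) = fun _ => (1 : ℂ) := by
      funext s; exact mul_inv_cancel₀ (F4 s)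
    rw [this, Matrix.diagonal_one]
  have hAeq : A = (n : ℂ)⁻¹ • (φᴴ * Matrix.diagonal ν * φ) := by
    rw [F3, smul_smul, inv_mul_cancel₀ hn0, one_smul]
  have hAB : A * B = 1 := by
    rw [hAeq, hB, Matrix.smul_mul, Matrix.mul_smul, smul_smul]
    have hmain : (φᴴ * Matrix.diagonal ν * φ) * (φᴴ * Matrix.diagonal (fun s => (ν s)⁻¹) * φ)
        = ((n : ℂ) * n) • (1 : _) := by
      calc (φᴴ * Matrix.diagonal ν * φ) * (φᴴ * Matrix.diagonal (fun s => (ν s)⁻¹) * φ)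
          = φᴴ * Matrix.diagonal ν * ((φ * φᴴ) * (Matrix.diagonal (fun s => (ν s)⁻¹) * φ)) := by
            simp only [Matrix.mul_assoc]
        _ = φᴴ * Matrix.diagonal ν * ((n : ℂ) • (Matrix.diagonal (fun s => (ν s)⁻¹) * φ)) := by
            rw [F2, Matrix.smul_mul, Matrix.one_mul]
        _ = (n : ℂ) • (φᴴ * Matrix.diagonal ν * (Matrix.diagonal (fun s => (ν s)⁻¹) * φ)) := by
            rw [Matrix.mul_smul]
        _ = (n : ℂ) • (φᴴ * (Matrix.diagonal ν * Matrix.diagonal (fun s => (ν s)⁻¹)) * φ) := by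
            simp only [Matrix.mul_assoc]
        _ = (n : ℂ) • (φᴴ * φ) := by rw [hDD, Matrix.mul_one]
        _ = ((n : ℂ) * n) • (1 : _) := by rw [F1, smul_smul]
    rw [hmain, smul_smul]
    rw [show ((n:ℂ)⁻¹ * (n:ℂ)⁻¹) * ((n:ℂ) * n) = 1 by field_simp, one_smul]
  have hinv : A⁻¹ = B := Matrix.inv_eq_right_inv hAB
  refine ⟨⟨(n : ℂ)⁻¹ • fun x => ∑ u, (ν u)⁻¹ * mcmE m u (-x), ?_⟩, hinv⟩
  rw [hinv, hB, mcm_diag φ hφE (fun s => (ν s)⁻¹), Matrix.circulant_smul]
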